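/- arXiv:2408.06191 — 2 statements merged into one kernel-verified Lean document; each statement's English description precedes it below -/
import Mathlib

section
/- The irreducible invariant characters of gl_n(𝔽_q) are pairwise orthogonal with respect to the inner product (·,·)_n and form a ℂ-basis of the space C_n of invariant functions. -/
open Matrix BigOperators

namespace HCPaper

open scoped Classical

/-- `gl F n` : the additive group of `n × n` matrices over `F`. -/
abbrev gl (F : Type) (n : ℕ) := Matrix (Fin n) (Fin n) F

variable {F : Type} [Field F] [Fintype F] [DecidableEq F]

/-- Conjugation (adjoint) action of `GL_n(F)` on `gl_n(F)`. -/
def conjM {n : ℕ} (g : Matrix.GeneralLinearGroup (Fin n) F) (x : gl F n) : gl F n :=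
  (g : Matrix (Fin n) (Fin n) F) * x * ((g⁻¹ : Matrix.GeneralLinearGroup (Fin n) F) : Matrix (Fin n) (Fin n) F)

/-- A function `f : gl_n(F) → ℂ` is invariant if it is constant on `GL_n(F)`-conjugacy orbits. -/
def Invariant (n : ℕ) (f : gl F n → ℂ) : Prop :=
  ∀ (g : Matrix.GeneralLinearGroup (Fin n) F) (x : gl F n), f (conjM g x) = f x

/-- Invariance for functions on `gl_k(F) × gl_l(F)` under `GL_k(F) × GL_l(F)`. -/
def Invariant₂ (k l : ℕ) (h : gl F k × gl F l → ℂ) : Prop :=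
  ∀ (g₁ : Matrix.GeneralLinearGroup (Fin k) F) (g₂ : Matrix.GeneralLinearGroup (Fin l) F)
    (x : gl F k) (y : gl F l), h (conjM g₁ x, conjM g₂ y) = h (x, y)

/-- Transport of matrices along an equality of sizes. -/
def castM {m n : ℕ} (h : m = n) (x : gl F m) : gl F n :=
  Matrix.reindex (finCongr h) (finCongr h) x

/-- Transport of functions along an equality of sizes. -/
def castFun {m n : ℕ} (h : m = n) (f : gl F m → ℂ) : gl F n → ℂ :=
  fun x => f (castM h.symm x)

/-- The block upper-triangular matrix `[x u; 0 y]`, viewed in `gl_{k+l}(F)`. -/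
def but (k l : ℕ) (x : gl F k) (u : Matrix (Fin k) (Fin l) F) (y : gl F l) : gl F (k + l) :=
  Matrix.reindex finSumFinEquiv finSumFinEquiv (Matrix.fromBlocks x u 0 y)

/-- The block lower-triangular matrix `[x 0; v y]`, viewed in `gl_{k+l}(F)`. -/
def blt (k l : ℕ) (x : gl F k) (v : Matrix (Fin l) (Fin k) F) (y : gl F l) : gl F (k + l) :=
  Matrix.reindex finSumFinEquiv finSumFinEquiv (Matrix.fromBlocks x 0 v y)

/-- View a matrix in `gl_{k+l}(F)` as a `2 × 2`-block matrix. -/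
def blk (k l : ℕ) (m : gl F (k + l)) : Matrix (Fin k ⊕ Fin l) (Fin k ⊕ Fin l) F :=
  Matrix.reindex finSumFinEquiv.symm finSumFinEquiv.symm m

/-- Membership in `P_{k,l}` : being block upper triangular with blocks of sizes `k, l`. -/
def IsBUT (k l : ℕ) (m : gl F (k + l)) : Prop := Matrix.toBlocks₂₁ (blk k l m) = 0

/-- The projection `π : P_{k,l} → gl_k(F) × gl_l(F)` deleting the off-diagonal block. -/
def proj (k l : ℕ) (m : gl F (k + l)) : gl F k × gl F l :=
  (Matrix.toBlocks₁₁ (blk k l m), Matrix.toBlocks₂₂ (blk k l m))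

/-- The order of the group `P^×_{k,l}` of invertible block upper-triangular matrices. -/
noncomputable def Pcard (F : Type) [Field F] [Fintype F] [DecidableEq F] (k l : ℕ) : ℕ :=
  Nat.card {g : Matrix.GeneralLinearGroup (Fin (k + l)) F //
    IsBUT k l (g : Matrix (Fin (k + l)) (Fin (k + l)) F)}

/-- Harish-Chandra restriction `*R^{k+l}_{k,l}`; by convention it is the identity
(under the canonical identifications) when `k = 0` or `l = 0`. -/
noncomputable def HCres (k l : ℕ) (f : gl F (k + l) → ℂ) : gl F k × gl F l → ℂ :=
  if hk : k = 0 then fun p => f (castM (by omega) p.2)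
  else if hl : l = 0 then fun p => f (castM (by omega) p.1)
  else fun p =>
    ((Fintype.card F : ℂ) ^ (k * l))⁻¹ * ∑ u : Matrix (Fin k) (Fin l) F, f (but k l p.1 u p.2)

/-- Harish-Chandra induction `R^{k+l}_{k,l}`; by convention it is the identity
(under the canonical identifications) when `k = 0` or `l = 0`. -/
noncomputable def HCind (k l : ℕ) (h : gl F k × gl F l → ℂ) : gl F (k + l) → ℂ :=
  if hk : k = 0 then fun z => h (0, castM (by omega) z)
  else if hl : l = 0 then fun z => h (castM (by omega) z, 0)
  else fun z =>
    ((Pcard F k l : ℂ))⁻¹ *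
      ∑ g : Matrix.GeneralLinearGroup (Fin (k + l)) F,
        if IsBUT k l (conjM g z) then h (proj k l (conjM g z)) else 0

/-- The hermitian inner product on `C_n`. -/
noncomputable def inn (n : ℕ) (f g : gl F n → ℂ) : ℂ :=
  ((Fintype.card (Matrix.GeneralLinearGroup (Fin n) F) : ℂ))⁻¹ *
    ∑ x : gl F n, f x * (starRingEnd ℂ) (g x)

/-- The hermitian inner product on invariant functions on `gl_k(F) × gl_l(F)`. -/
noncomputable def inn₂ (k l : ℕ) (f g : gl F k × gl F l → ℂ) : ℂ :=
  ((Fintype.card (Matrix.GeneralLinearGroup (Fin k) F) *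
      Fintype.card (Matrix.GeneralLinearGroup (Fin l) F) : ℂ))⁻¹ *
    ∑ p : gl F k × gl F l, f p * (starRingEnd ℂ) (g p)

/-- `f ∈ C_n` is pre-cuspidal if all proper Harish-Chandra restrictions of `f` vanish. -/
def PreCuspidal (n : ℕ) (f : gl F n → ℂ) : Prop :=
  ∀ (k l : ℕ), 1 ≤ k → 1 ≤ l → ∀ hkl : k + l = n, HCres k l (castFun hkl.symm f) = 0

/-- The composite `R_{(n_1,…,n_r)} ∘ *R_{(n_1,…,n_r)}` of the iterated two-block
Harish-Chandra induction and restriction along the composition `(n_1,…,n_r)`. -/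
noncomputable def RcompRes : (L : List ℕ) → (gl F L.sum → ℂ) → gl F L.sum → ℂ
  | [], f => f
  | (k :: L), f =>
      castFun (List.sum_cons).symm
        (HCind k L.sum fun p =>
          RcompRes L (fun y => HCres k L.sum (castFun List.sum_cons f) (p.1, y)) p.2)

/-- The duality operation `𝒟_n(f) = Σ_{(n_1,…,n_r) ⊨ n} (-1)^{n-r}
R_{(n_1,…,n_r)}(*R_{(n_1,…,n_r)} f)`, the sum over all compositions of `n`. -/
noncomputable def Dual (n : ℕ) (f : gl F n → ℂ) : gl F n → ℂ :=
  ∑ c : Composition n,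
    ((-1 : ℂ)) ^ (n - c.length) •
      castFun c.blocks_sum (RcompRes c.blocks (castFun c.blocks_sum.symm f))

/-- `C_n`, the subspace of invariant functions, as a `ℂ`-submodule of all functions. -/
noncomputable def InvSub (F : Type) [Field F] (n : ℕ) : Submodule ℂ (gl F n → ℂ) where
  carrier := {f | Invariant n f}
  add_mem' := by
    intro a b ha hb g x
    simp only [Pi.add_apply]
    rw [ha g x, hb g x]
  zero_mem' := by intro g x; rfl
  smul_mem' := by
    intro c f hf g x
    simp only [Pi.smul_apply]
    rw [hf g x]

/-- `χ` is the character of a finite-dimensional complex representation of the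
additive group `gl_n(F)`. -/
def IsChar (n : ℕ) (χ : gl F n → ℂ) : Prop :=
  ∃ V : FDRep ℂ (Multiplicative (gl F n)),
    ∀ x : gl F n, FDRep.character V (Multiplicative.ofAdd x) = χ x

/-- An invariant character of `gl_n(F)`. -/
def IsInvChar (n : ℕ) (χ : gl F n → ℂ) : Prop := IsChar n χ ∧ Invariant n χ

/-- A character of the additive group `gl_k(F) × gl_l(F)`. -/
def IsChar₂ (k l : ℕ) (χ : gl F k × gl F l → ℂ) : Prop :=
  ∃ V : FDRep ℂ (Multiplicative (gl F k × gl F l)),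
    ∀ p : gl F k × gl F l, FDRep.character V (Multiplicative.ofAdd p) = χ p

/-- An invariant character of `gl_k(F) × gl_l(F)`. -/
def IsInvChar₂ (k l : ℕ) (χ : gl F k × gl F l → ℂ) : Prop := IsChar₂ k l χ ∧ Invariant₂ k l χ

/-- An irreducible invariant character: a nonzero invariant character which is not
the sum of two nonzero invariant characters. -/
def IrrInvChar (n : ℕ) (χ : gl F n → ℂ) : Prop :=
  IsInvChar n χ ∧ χ ≠ 0 ∧
    ¬ ∃ χ₁ χ₂ : gl F n → ℂ, IsInvChar n χ₁ ∧ IsInvChar n χ₂ ∧ χ₁ ≠ 0 ∧ χ₂ ≠ 0 ∧ χ = χ₁ + χ₂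


/-! ### Auxiliary development: additive characters and orbit sums -/

section AuxChar

lemma aux_exists_addhom (p : ℕ) [Fact p.Prime] (M : Type) [AddCommGroup M] [Module (ZMod p) M]
    [Nontrivial M] : ∃ φ : M →+ ZMod p, ∃ x : M, φ x = 1 := by
  haveI := Module.Free.of_divisionRing (ZMod p) M
  obtain ⟨ι, b⟩ := Module.Free.exists_basis (R := ZMod p) (M := M)
  obtain ⟨i₀⟩ := Module.Basis.index_nonempty b
  exact ⟨(b.coord i₀).toAddMonoidHom, b i₀, by simp⟩

/-- A nontrivial additive character of `F` with values in `ℂ`. -/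
structure AChar (F : Type) [Field F] : Type where
  ψ : F → ℂ
  zero' : ψ 0 = 1
  add' : ∀ s t : F, ψ (s + t) = ψ s * ψ t
  nt' : ∃ s : F, ψ s ≠ 1

lemma exists_achar (F : Type) [Field F] [Fintype F] : Nonempty (AChar F) := by
  obtain ⟨p, hp⟩ := CharP.exists F
  haveI := hp
  have hprime : p.Prime := CharP.char_is_prime F p
  haveI : Fact p.Prime := ⟨hprime⟩
  haveI : NeZero p := ⟨hprime.ne_zero⟩
  letI : Module (ZMod p) F := AddCommGroup.zmodModule (by
    intro x
    have h0 : (p : F) = 0 := CharP.cast_eq_zero F p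
    rw [nsmul_eq_mul, h0, zero_mul])
  obtain ⟨φ, x₀, hx₀⟩ := aux_exists_addhom p F
  set ζ : ℂ := Complex.exp (2 * Real.pi * Complex.I / p) with hζdef
  have hζ : IsPrimitiveRoot ζ p := Complex.isPrimitiveRoot_exp p hprime.ne_zero
  have hζp : ζ ^ p = 1 := hζ.pow_eq_one
  have hmod : ∀ m : ℕ, ζ ^ (m % p) = ζ ^ m := by
    intro m
    conv_rhs => rw [← Nat.mod_add_div m p]
    rw [pow_add, pow_mul, hζp, one_pow, mul_one]
  refine ⟨⟨fun t => ζ ^ (φ t).val, ?_, ?_, ?_⟩⟩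
  · simp
  · intro s t
    show ζ ^ (φ (s + t)).val = ζ ^ (φ s).val * ζ ^ (φ t).val
    rw [φ.map_add, ZMod.val_add, hmod, pow_add]
  · refine ⟨x₀, ?_⟩
    haveI : Fact (1 < p) := ⟨hprime.one_lt⟩
    show ζ ^ (φ x₀).val ≠ 1
    rw [hx₀, ZMod.val_one, pow_one]
    exact hζ.ne_one hprime.one_lt

variable {F : Type} [Field F] [Fintype F] [DecidableEq F]

lemma AChar.inv_mul (W : AChar F) (s : F) : W.ψ (-s) * W.ψ s = 1 := by
  rw [← W.add', neg_add_cancel, W.zero']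

lemma AChar.psi_ne_zero (W : AChar F) (s : F) : W.ψ s ≠ 0 := by
  intro h
  have h2 := W.inv_mul s
  rw [h, mul_zero] at h2
  exact zero_ne_one h2

lemma AChar.nsmul' (W : AChar F) (m : ℕ) (s : F) : W.ψ (m • s) = W.ψ s ^ m := by
  induction m with
  | zero => simpa using W.zero'
  | succ k ih => rw [succ_nsmul, W.add', ih, pow_succ]

lemma AChar.conj' (W : AChar F) (s : F) : (starRingEnd ℂ) (W.ψ s) = W.ψ (-s) := by
  have hpow : W.ψ s ^ Fintype.card F = 1 := by
    rw [← W.nsmul', card_nsmul_eq_zero, W.zero']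
  have hnorm : ‖W.ψ s‖ = 1 := Complex.norm_eq_one_of_pow_eq_one hpow Fintype.card_ne_zero
  have h2 : Complex.normSq (W.ψ s) = 1 := by
    rw [Complex.normSq_eq_norm_sq, hnorm, one_pow]
  have h1 : W.ψ s * (starRingEnd ℂ) (W.ψ s) = 1 := by
    rw [Complex.mul_conj, h2, Complex.ofReal_one]
  have e1 : (starRingEnd ℂ) (W.ψ s) = (W.ψ s)⁻¹ := eq_inv_of_mul_eq_one_left (by
    rw [mul_comm] at h1; exact h1)
  have e2 : W.ψ (-s) = (W.ψ s)⁻¹ := eq_inv_of_mul_eq_one_left (W.inv_mul s)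
  rw [e1, ← e2]

/-- Diagonal endomorphism of `ι → ℂ` with weights `w`. -/
noncomputable def diagEnd {ι : Type} [Fintype ι] (w : ι → ℂ) : (ι → ℂ) →ₗ[ℂ] (ι → ℂ) where
  toFun v := fun i => w i * v i
  map_add' u v := by funext i; simp [mul_add]
  map_smul' c v := by funext i; simp; ring

lemma trace_diagEnd {ι : Type} [Fintype ι] (w : ι → ℂ) :
    LinearMap.trace ℂ (ι → ℂ) (diagEnd w) = ∑ i, w i := by
  rw [LinearMap.trace_eq_matrix_trace ℂ (Pi.basisFun ℂ ι)]
  rw [Matrix.trace]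
  congr 1
  funext i
  simp [Matrix.diag, LinearMap.toMatrix_apply, diagEnd, Pi.basisFun_apply]

/-- Diagonal representation of `Multiplicative A` on `ι → ℂ`. -/
noncomputable def diagRep {ι A : Type} [Fintype ι] [AddCommGroup A] (e : ι → A → ℂ)
    (h0 : ∀ i, e i 0 = 1) (hadd : ∀ i x y, e i (x + y) = e i x * e i y) :
    Representation ℂ (Multiplicative A) (ι → ℂ) where
  toFun x := diagEnd (fun i => e i x.toAdd)
  map_one' := by
    apply LinearMap.ext; intro v; funext i
    simp [diagEnd, h0]
  map_mul' x y := by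
    apply LinearMap.ext; intro v; funext i
    simp [diagEnd, hadd, toAdd_mul, mul_assoc]

lemma char_diagRep {ι A : Type} [Fintype ι] [AddCommGroup A] (e : ι → A → ℂ)
    (h0 : ∀ i, e i 0 = 1) (hadd : ∀ i x y, e i (x + y) = e i x * e i y)
    (g : Multiplicative A) :
    (FDRep.of (diagRep e h0 hadd)).character g = ∑ i, e i g.toAdd := by
  show LinearMap.trace ℂ (ι → ℂ) (diagRep e h0 hadd g) = _
  exact trace_diagEnd _

lemma exists_nat_trace {A : Type} [Fintype A] [AddCommGroup A] (V : FDRep ℂ (Multiplicative A))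
    (u : A → ℂ) (hadd : ∀ x y, u x * u y = u (x + y)) :
    ∃ m : ℕ, (Fintype.card A : ℂ)⁻¹ * ∑ x : A, u x * V.character (Multiplicative.ofAdd x) = m := by
  have hcard : (Fintype.card A : ℂ) ≠ 0 := by
    exact_mod_cast Fintype.card_ne_zero
  set S : V →ₗ[ℂ] V := ∑ x : A, u x • V.ρ (Multiplicative.ofAdd x) with hS
  set P : V →ₗ[ℂ] V := (Fintype.card A : ℂ)⁻¹ • S with hPdef
  have hmul : ∀ x y : A,
      (u x • V.ρ (Multiplicative.ofAdd x)) * (u y • V.ρ (Multiplicative.ofAdd y))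
        = u (x + y) • V.ρ (Multiplicative.ofAdd (x + y)) := by
    intro x y
    rw [smul_mul_smul_comm, hadd, ← _root_.map_mul, ← ofAdd_add]
  have hSS : S * S = (Fintype.card A : ℂ) • S := by
    rw [hS, Finset.sum_mul_sum]
    have h : ∀ x : A, ∑ y : A,
        (u x • V.ρ (Multiplicative.ofAdd x)) * (u y • V.ρ (Multiplicative.ofAdd y)) = S := by
      intro x
      rw [hS]
      refine Fintype.sum_equiv (Equiv.addLeft x) _ _ ?_
      intro y
      rw [hmul]
      rfl
    rw [Finset.sum_congr rfl (fun x _ => h x), Finset.sum_const, Finset.card_univ]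
    exact (Nat.cast_smul_eq_nsmul ℂ _ _).symm
  have hPP : P * P = P := by
    rw [hPdef, smul_mul_smul_comm, hSS, smul_smul]
    congr 1
    field_simp
  have hPP' : ∀ v : V, P (P v) = P v := fun v => by
    have h := DFunLike.congr_fun hPP v
    rwa [Module.End.mul_apply] at h
  have hproj : LinearMap.IsProj (LinearMap.range P) P := by
    refine ⟨fun x => LinearMap.mem_range_self P x, ?_⟩
    rintro x ⟨y, rfl⟩
    exact hPP' y
  have htr := hproj.trace
  refine ⟨Module.finrank ℂ (LinearMap.range P), ?_⟩
  rw [← htr, hPdef, _root_.map_smul, hS, _root_.map_sum]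
  rw [smul_eq_mul]
  congr 1
  refine Finset.sum_congr rfl fun x _ => ?_
  rw [_root_.map_smul, smul_eq_mul]
  rfl

/-! ### Matrix additive characters -/

/-- The additive character `x ↦ ψ(tr(ax))` of `gl_n(F)`. -/
noncomputable def ech (W : AChar F) {n : ℕ} (a : gl F n) (x : gl F n) : ℂ :=
  W.ψ ((a * x).trace)

lemma ech_zero_right (W : AChar F) {n : ℕ} (a : gl F n) : ech W a 0 = 1 := by
  unfold ech
  rw [Matrix.mul_zero, Matrix.trace_zero, W.zero']

lemma ech_add_right (W : AChar F) {n : ℕ} (a x y : gl F n) :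
    ech W a (x + y) = ech W a x * ech W a y := by
  unfold ech
  rw [Matrix.mul_add, Matrix.trace_add, W.add']

lemma ech_neg_right (W : AChar F) {n : ℕ} (a x : gl F n) : ech W a (-x) = ech W (-a) x := by
  unfold ech
  rw [Matrix.mul_neg, ← Matrix.neg_mul]

lemma ech_mul_left (W : AChar F) {n : ℕ} (a b x : gl F n) :
    ech W a x * ech W b x = ech W (a + b) x := by
  unfold ech
  rw [← W.add', Matrix.add_mul, Matrix.trace_add]

lemma ech_conj (W : AChar F) {n : ℕ} (a x : gl F n) :
    (starRingEnd ℂ) (ech W a x) = ech W a (-x) := by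
  unfold ech
  rw [W.conj', Matrix.mul_neg, Matrix.trace_neg]

lemma trace_mul_std {n : ℕ} (z : gl F n) (i j : Fin n) (c : F) :
    (z * Matrix.single j i c).trace = z i j * c := by
  have h : ∀ k : Fin n, (z * Matrix.single j i c) k k
      = if i = k then z k j * c else 0 := by
    intro k
    rw [Matrix.mul_apply, Finset.sum_eq_single j]
    · simp [Matrix.single, mul_ite]
    · intro m _ hm
      simp [Matrix.single, Ne.symm hm]
    · intro hj
      exact absurd (Finset.mem_univ j) hj
  unfold Matrix.trace
  rw [Finset.sum_congr rfl fun k _ => by rw [Matrix.diag_apply, h k]]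
  rw [Finset.sum_ite_eq Finset.univ i, if_pos (Finset.mem_univ i)]

lemma ech_exists_ne_one (W : AChar F) {n : ℕ} {z : gl F n} (hz : z ≠ 0) :
    ∃ x, ech W z x ≠ 1 := by
  obtain ⟨s₀, hs₀⟩ := W.nt'
  have hij : ∃ i j, z i j ≠ 0 := by
    by_contra h
    push_neg at h
    exact hz (by ext i j; simpa using h i j)
  obtain ⟨i, j, hij⟩ := hij
  refine ⟨Matrix.single j i (s₀ / z i j), ?_⟩
  unfold ech
  rw [trace_mul_std]
  rw [mul_div_cancel₀ _ hij]
  exact hs₀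

lemma card_gl_ne_zero {n : ℕ} : (Fintype.card (gl F n) : ℂ) ≠ 0 := by
  exact_mod_cast Fintype.card_ne_zero

lemma sum_ech (W : AChar F) {n : ℕ} (z : gl F n) :
    ∑ x : gl F n, ech W z x = if z = 0 then (Fintype.card (gl F n) : ℂ) else 0 := by
  by_cases hz : z = 0
  · subst hz
    rw [if_pos rfl]
    have h : ∀ x : gl F n, ech W (0 : gl F n) x = 1 := by
      intro x
      unfold ech
      rw [Matrix.zero_mul, Matrix.trace_zero, W.zero']
    rw [Finset.sum_congr rfl fun x _ => h x, Finset.sum_const, Finset.card_univ]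
    simp
  · rw [if_neg hz]
    obtain ⟨x₀, hx₀⟩ := ech_exists_ne_one W hz
    have key : (∑ x : gl F n, ech W z x) * ech W z x₀ = ∑ x : gl F n, ech W z x := by
      rw [Finset.sum_mul]
      rw [Finset.sum_congr rfl fun x _ => (ech_add_right W z x x₀).symm]
      exact Fintype.sum_equiv (Equiv.addRight x₀) _ _ (fun x => rfl)
    have h2 : (∑ x : gl F n, ech W z x) * (1 - ech W z x₀) = 0 := by
      rw [mul_sub, mul_one, key, sub_self]
    rcases mul_eq_zero.mp h2 with h | h
    · exact h
    · exact absurd (by rw [sub_eq_zero] at h; exact h.symm) hx₀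

lemma sum_ech' (W : AChar F) {n : ℕ} (w : gl F n) :
    ∑ a : gl F n, ech W a w = if w = 0 then (Fintype.card (gl F n) : ℂ) else 0 := by
  have h : ∀ a : gl F n, ech W a w = ech W w a := by
    intro a
    unfold ech
    rw [Matrix.trace_mul_comm]
  rw [Finset.sum_congr rfl fun a _ => h a]
  exact sum_ech W w

/-- Fourier coefficient of `f` at the character `x ↦ ψ(tr(ax))`. -/
noncomputable def co (W : AChar F) {n : ℕ} (f : gl F n → ℂ) (a : gl F n) : ℂ :=
  (Fintype.card (gl F n) : ℂ)⁻¹ * ∑ y : gl F n, f y * ech W a (-y)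

lemma sum_co_ech (W : AChar F) {n : ℕ} (f : gl F n → ℂ) (x : gl F n) :
    ∑ a : gl F n, co W f a * ech W a x = f x := by
  unfold co
  have h1 : ∀ a : gl F n,
      ((Fintype.card (gl F n) : ℂ)⁻¹ * ∑ y : gl F n, f y * ech W a (-y)) * ech W a x
        = (Fintype.card (gl F n) : ℂ)⁻¹ * ∑ y : gl F n, f y * ech W a (x - y) := by
    intro a
    rw [mul_assoc, Finset.sum_mul]
    congr 1
    refine Finset.sum_congr rfl fun y _ => ?_
    rw [mul_assoc]
    congr 1
    rw [← ech_add_right, neg_add_eq_sub]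
  rw [Finset.sum_congr rfl fun a _ => h1 a, ← Finset.mul_sum, Finset.sum_comm]
  have h2 : ∀ y : gl F n, ∑ a : gl F n, f y * ech W a (x - y)
      = f y * (if x - y = 0 then (Fintype.card (gl F n) : ℂ) else 0) := by
    intro y
    rw [← Finset.mul_sum, sum_ech']
  rw [Finset.sum_congr rfl fun y _ => h2 y]
  have h3 : ∀ y : gl F n, f y * (if x - y = 0 then (Fintype.card (gl F n) : ℂ) else 0)
      = if x = y then f y * (Fintype.card (gl F n) : ℂ) else 0 := by
    intro y
    by_cases h : x = y
    · rw [if_pos h, if_pos (by rw [h, sub_self])]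
    · rw [if_neg h, if_neg (fun hh => h (by rwa [sub_eq_zero] at hh)), mul_zero]
  rw [Finset.sum_congr rfl fun y _ => h3 y, Finset.sum_ite_eq Finset.univ x]
  rw [if_pos (Finset.mem_univ x)]
  rw [mul_comm (f x), ← mul_assoc, inv_mul_cancel₀ card_gl_ne_zero, one_mul]

lemma co_ech (W : AChar F) {n : ℕ} (a b : gl F n) :
    co W (ech W b) a = if a = b then 1 else 0 := by
  unfold co
  have h1 : ∀ y : gl F n, ech W b y * ech W a (-y) = ech W (b - a) y := by
    intro y
    rw [ech_neg_right, ech_mul_left, ← sub_eq_add_neg]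
  rw [Finset.sum_congr rfl fun y _ => h1 y, sum_ech]
  by_cases h : a = b
  · rw [if_pos (by rw [h, sub_self]), if_pos h, inv_mul_cancel₀ card_gl_ne_zero]
  · rw [if_neg (fun hh => h (by rw [sub_eq_zero] at hh; exact hh.symm)), if_neg h, mul_zero]

lemma co_addf (W : AChar F) {n : ℕ} (f g : gl F n → ℂ) (a : gl F n) :
    co W (fun x => f x + g x) a = co W f a + co W g a := by
  unfold co
  rw [← mul_add, ← Finset.sum_add_distrib]
  congr 1
  refine Finset.sum_congr rfl fun y _ => ?_
  rw [add_mul]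

lemma co_subf (W : AChar F) {n : ℕ} (f g : gl F n → ℂ) (a : gl F n) :
    co W (fun x => f x - g x) a = co W f a - co W g a := by
  unfold co
  rw [← mul_sub, ← Finset.sum_sub_distrib]
  congr 1
  refine Finset.sum_congr rfl fun y _ => ?_
  rw [sub_mul]

lemma co_zerof (W : AChar F) {n : ℕ} (a : gl F n) :
    co W (fun _ : gl F n => (0 : ℂ)) a = 0 := by
  unfold co
  simp

lemma co_sumf (W : AChar F) {n : ℕ} {γ : Type} [Fintype γ] (h : γ → gl F n → ℂ) (a : gl F n) :
    co W (fun x => ∑ c : γ, h c x) a = ∑ c : γ, co W (h c) a := by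
  unfold co
  rw [← Finset.mul_sum]
  congr 1
  rw [Finset.sum_congr rfl fun y _ => Finset.sum_mul _ _ _, Finset.sum_comm]

lemma exists_co_ne_zero (W : AChar F) {n : ℕ} {χ : gl F n → ℂ} (h : χ ≠ 0) :
    ∃ a, co W χ a ≠ 0 := by
  by_contra hall
  push_neg at hall
  apply h
  funext x
  have h1 := (sum_co_ech W χ x).symm
  rw [h1, Finset.sum_congr rfl fun a _ => by rw [hall a, zero_mul]]
  simp

end AuxChar

section AuxOrbit

variable {F : Type} [Field F] [Fintype F] [DecidableEq F]

lemma conjM_comp {n : ℕ} (g h : Matrix.GeneralLinearGroup (Fin n) F) (x : gl F n) :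
    conjM g (conjM h x) = conjM (g * h) x := by
  unfold conjM
  rw [_root_.mul_inv_rev]
  simp [Units.val_mul, Matrix.mul_assoc]

lemma conjM_one {n : ℕ} (x : gl F n) :
    conjM (1 : Matrix.GeneralLinearGroup (Fin n) F) x = x := by
  unfold conjM
  simp

/-- Conjugation as an equivalence of `gl_n(F)`. -/
def conjEquiv {n : ℕ} (g : Matrix.GeneralLinearGroup (Fin n) F) : gl F n ≃ gl F n where
  toFun := conjM g
  invFun := conjM g⁻¹
  left_inv x := by rw [conjM_comp, inv_mul_cancel, conjM_one]
  right_inv x := by rw [conjM_comp, mul_inv_cancel, conjM_one]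

lemma conjM_neg {n : ℕ} (g : Matrix.GeneralLinearGroup (Fin n) F) (x : gl F n) :
    conjM g (-x) = -(conjM g x) := by
  unfold conjM
  rw [Matrix.mul_neg, Matrix.neg_mul]

lemma trace_conjM_pair {n : ℕ} (g : Matrix.GeneralLinearGroup (Fin n) F) (a x : gl F n) :
    ((conjM g a) * (conjM g x)).trace = (a * x).trace := by
  have hinv : ((g⁻¹ : Matrix.GeneralLinearGroup (Fin n) F) : Matrix (Fin n) (Fin n) F)
      * (g : Matrix (Fin n) (Fin n) F) = 1 := Units.inv_mul g
  have hmain : (conjM g a) * (conjM g x)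
      = (g : Matrix (Fin n) (Fin n) F) * (a * x)
        * ((g⁻¹ : Matrix.GeneralLinearGroup (Fin n) F) : Matrix (Fin n) (Fin n) F) := by
    unfold conjM
    simp only [Matrix.mul_assoc]
    congr 2
    rw [← Matrix.mul_assoc, hinv, Matrix.one_mul]
  rw [hmain, Matrix.trace_mul_comm, ← Matrix.mul_assoc, ← Matrix.mul_assoc, hinv,
    Matrix.one_mul]

lemma ech_conjM (W : AChar F) {n : ℕ} (g : Matrix.GeneralLinearGroup (Fin n) F)
    (c x : gl F n) : ech W c (conjM g x) = ech W (conjM g⁻¹ c) x := by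
  have h2 : conjM g (conjM g⁻¹ c) = c := by rw [conjM_comp, mul_inv_cancel, conjM_one]
  have h1 := trace_conjM_pair g (conjM g⁻¹ c) x
  unfold ech
  rw [← h1, h2]

lemma co_conjM (W : AChar F) {n : ℕ} (f : gl F n → ℂ) (hf : Invariant n f)
    (g : Matrix.GeneralLinearGroup (Fin n) F) (a : gl F n) :
    co W f (conjM g a) = co W f a := by
  unfold co
  congr 1
  refine (Fintype.sum_equiv (conjEquiv g) (fun x => f x * ech W a (-x))
    (fun y => f y * ech W (conjM g a) (-y)) ?_).symm
  intro x
  show f x * ech W a (-x) = f (conjM g x) * ech W (conjM g a) (-(conjM g x))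
  rw [hf g x, ← conjM_neg]
  congr 1
  unfold ech
  rw [trace_conjM_pair]

/-- The conjugation orbit relation on `gl_n(F)`. -/
def InOrb {n : ℕ} (a b : gl F n) : Prop :=
  ∃ g : Matrix.GeneralLinearGroup (Fin n) F, conjM g a = b

lemma InOrb.rfl' {n : ℕ} (a : gl F n) : InOrb a a := ⟨1, conjM_one a⟩

lemma InOrb.symm' {n : ℕ} {a b : gl F n} (h : InOrb a b) : InOrb b a := by
  obtain ⟨g, rfl⟩ := h
  exact ⟨g⁻¹, by rw [conjM_comp, inv_mul_cancel, conjM_one]⟩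

lemma InOrb.trans' {n : ℕ} {a b c : gl F n} (h1 : InOrb a b) (h2 : InOrb b c) : InOrb a c := by
  obtain ⟨g1, rfl⟩ := h1
  obtain ⟨g2, rfl⟩ := h2
  exact ⟨g2 * g1, (conjM_comp g2 g1 a).symm⟩

lemma InOrb_iff_of {n : ℕ} {a b : gl F n} (h : InOrb a b) (c : gl F n) :
    InOrb a c ↔ InOrb b c :=
  ⟨fun h2 => h.symm'.trans' h2, fun h2 => h.trans' h2⟩

lemma InOrb_conj_right {n : ℕ} (a c : gl F n) (g : Matrix.GeneralLinearGroup (Fin n) F) :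
    InOrb a (conjM g c) ↔ InOrb a c :=
  ⟨fun h => h.trans' (InOrb.symm' ⟨g, rfl⟩), fun h => h.trans' ⟨g, rfl⟩⟩

/-- The orbit-sum function attached to `a`. -/
noncomputable def Osum (W : AChar F) {n : ℕ} (a : gl F n) : gl F n → ℂ :=
  fun x => ∑ b : gl F n, if InOrb a b then ech W b x else 0

lemma co_Osum (W : AChar F) {n : ℕ} (a b : gl F n) :
    co W (Osum W a) b = if InOrb a b then 1 else 0 := by
  unfold Osum
  rw [co_sumf W (fun c x => if InOrb a c then ech W c x else 0) b]
  have h1 : ∀ c : gl F n, co W (fun x => if InOrb a c then ech W c x else 0) b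
      = if InOrb a c then (if b = c then (1 : ℂ) else 0) else 0 := by
    intro c
    by_cases h : InOrb a c
    · simp only [if_pos h]
      exact co_ech W b c
    · simp only [if_neg h]
      exact co_zerof W b
  rw [Finset.sum_congr rfl fun c _ => h1 c]
  have h2 : ∀ c : gl F n, (if InOrb a c then (if b = c then (1 : ℂ) else 0) else 0)
      = if b = c then (if InOrb a c then 1 else 0) else 0 := by
    intro c
    by_cases hi : InOrb a c <;> by_cases hb : b = c <;> simp [hi, hb]
  rw [Finset.sum_congr rfl fun c _ => h2 c, Finset.sum_ite_eq Finset.univ b]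
  rw [if_pos (Finset.mem_univ b)]

lemma Osum_invariant (W : AChar F) {n : ℕ} (a : gl F n) : Invariant n (Osum W a) := by
  intro g x
  unfold Osum
  refine Fintype.sum_equiv (conjEquiv g⁻¹) _ _ ?_
  intro b
  show (if InOrb a b then ech W b (conjM g x) else 0)
      = if InOrb a (conjM g⁻¹ b) then ech W (conjM g⁻¹ b) x else 0
  rw [← ech_conjM W g b x]
  by_cases hb : InOrb a b
  · rw [if_pos hb, if_pos ((InOrb_conj_right a b g⁻¹).mpr hb)]
  · rw [if_neg hb, if_neg (fun h => hb ((InOrb_conj_right a b g⁻¹).mp h))]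

lemma Osum_eq_of (W : AChar F) {n : ℕ} {a b : gl F n} (h : InOrb a b) :
    Osum W a = Osum W b := by
  funext x
  unfold Osum
  refine Finset.sum_congr rfl fun c _ => ?_
  by_cases hc : InOrb a c
  · rw [if_pos hc, if_pos ((InOrb_iff_of h c).mp hc)]
  · rw [if_neg hc, if_neg (fun hb => hc ((InOrb_iff_of h c).mpr hb))]

end AuxOrbit

section AuxMain

variable {F : Type} [Field F] [Fintype F] [DecidableEq F]

lemma isChar_nat_comb (W : AChar F) {n : ℕ} (m : gl F n → ℕ) :
    IsChar n (fun x => ∑ b : gl F n, (m b : ℂ) * ech W b x) := by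
  refine ⟨FDRep.of (diagRep (ι := Σ b : gl F n, Fin (m b)) (fun i => ech W i.1)
    (fun i => ech_zero_right W i.1) (fun i x y => ech_add_right W i.1 x y)), ?_⟩
  intro x
  rw [char_diagRep]
  show ∑ i : Σ b : gl F n, Fin (m b), ech W i.1 x = _
  rw [← Finset.univ_sigma_univ, Finset.sum_sigma]
  refine Finset.sum_congr rfl fun b _ => ?_
  show ∑ _j : Fin (m b), ech W b x = (m b : ℂ) * ech W b x
  rw [Finset.sum_const, Finset.card_univ, Fintype.card_fin, nsmul_eq_mul]

lemma co_isChar_nat (W : AChar F) {n : ℕ} {χ : gl F n → ℂ} (h : IsChar n χ) (a : gl F n) :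
    ∃ m : ℕ, co W χ a = m := by
  obtain ⟨V, hV⟩ := h
  obtain ⟨m, hm⟩ := exists_nat_trace V (fun y => ech W a (-y)) (fun x y => by
    show ech W a (-x) * ech W a (-y) = ech W a (-(x + y))
    rw [← ech_add_right, neg_add])
  refine ⟨m, ?_⟩
  rw [← hm]
  unfold co
  congr 1
  refine Finset.sum_congr rfl fun y _ => ?_
  rw [← hV y, mul_comm]

lemma Osum_isChar (W : AChar F) {n : ℕ} (a : gl F n) : IsChar n (Osum W a) := by
  have h := isChar_nat_comb W (fun b : gl F n => if InOrb a b then 1 else 0)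
  have he : Osum W a = fun x => ∑ b : gl F n,
      (((if InOrb a b then 1 else 0 : ℕ) : ℂ)) * ech W b x := by
    funext x
    unfold Osum
    refine Finset.sum_congr rfl fun b _ => ?_
    by_cases hb : InOrb a b <;> simp [hb]
  rw [he]
  exact h

lemma Osum_ne_zero (W : AChar F) {n : ℕ} (a : gl F n) : Osum W a ≠ 0 := by
  intro h0
  have h1 := co_Osum W a a
  rw [h0, if_pos (InOrb.rfl' a)] at h1
  have h2 : co W (0 : gl F n → ℂ) a = 0 := co_zerof W a
  rw [h2] at h1
  exact one_ne_zero h1.symm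

lemma Osum_irr (W : AChar F) {n : ℕ} (a : gl F n) : IrrInvChar n (Osum W a) := by
  refine ⟨⟨Osum_isChar W a, Osum_invariant W a⟩, Osum_ne_zero W a, ?_⟩
  rintro ⟨χ₁, χ₂, ⟨hc1, hi1⟩, ⟨hc2, hi2⟩, hn1, hn2, heq⟩
  have hsum : ∀ b, co W χ₁ b + co W χ₂ b = (if InOrb a b then (1 : ℂ) else 0) := by
    intro b
    have h : co W (Osum W a) b = co W χ₁ b + co W χ₂ b := by
      rw [heq]
      exact co_addf W χ₁ χ₂ b
    rw [← h, co_Osum]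
  obtain ⟨b₁, hb₁⟩ := exists_co_ne_zero W hn1
  obtain ⟨b₂, hb₂⟩ := exists_co_ne_zero W hn2
  have hmem : ∀ b, co W χ₁ b ≠ 0 ∨ co W χ₂ b ≠ 0 → InOrb a b := by
    intro b hb
    by_contra hnb
    have hs := hsum b
    rw [if_neg hnb] at hs
    obtain ⟨m1, hm1⟩ := co_isChar_nat W hc1 b
    obtain ⟨m2, hm2⟩ := co_isChar_nat W hc2 b
    rw [hm1, hm2] at hs
    have hz : (m1 : ℂ) + m2 = ((0 : ℕ) : ℂ) := by rw [hs]; simp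
    have hz2 : m1 + m2 = 0 := by exact_mod_cast hz
    have hm10 : m1 = 0 := by omega
    have hm20 : m2 = 0 := by omega
    rcases hb with hb | hb
    · exact hb (by rw [hm1, hm10, Nat.cast_zero])
    · exact hb (by rw [hm2, hm20, Nat.cast_zero])
  have hab₁ : InOrb a b₁ := hmem b₁ (Or.inl hb₁)
  have hab₂ : InOrb a b₂ := hmem b₂ (Or.inr hb₂)
  have h21 : co W χ₂ b₁ = co W χ₂ b₂ := by
    have hbb : InOrb b₂ b₁ := (hab₂.symm').trans' hab₁
    obtain ⟨g, hg⟩ := hbb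
    rw [← hg, co_conjM W χ₂ hi2]
  have hs := hsum b₁
  rw [if_pos hab₁] at hs
  obtain ⟨m1, hm1⟩ := co_isChar_nat W hc1 b₁
  obtain ⟨m2, hm2⟩ := co_isChar_nat W hc2 b₂
  rw [hm1, h21, hm2] at hs
  have hcast : m1 + m2 = 1 := by exact_mod_cast hs
  have hm1pos : m1 ≠ 0 := fun h0 => hb₁ (by rw [hm1, h0, Nat.cast_zero])
  have hm2pos : m2 ≠ 0 := fun h0 => hb₂ (by rw [hm2, h0, Nat.cast_zero])
  omega

lemma irr_eq_Osum (W : AChar F) {n : ℕ} {χ : gl F n → ℂ} (h : IrrInvChar n χ) :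
    ∃ a, χ = Osum W a := by
  obtain ⟨⟨hchar, hinv⟩, hne, hirr⟩ := h
  obtain ⟨a, ha⟩ := exists_co_ne_zero W hne
  refine ⟨a, ?_⟩
  by_contra hneq
  set χ₂ : gl F n → ℂ := fun x => χ x - Osum W a x with hχ₂
  have hco2 : ∀ b, co W χ₂ b = co W χ b - (if InOrb a b then 1 else 0) := by
    intro b
    rw [hχ₂]
    rw [co_subf W χ (Osum W a) b, co_Osum]
  have horb : ∀ b, InOrb a b → co W χ b = co W χ a := by
    intro b hb
    obtain ⟨g, hg⟩ := hb
    rw [← hg, co_conjM W χ hinv]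
  obtain ⟨ka, hka⟩ := co_isChar_nat W hchar a
  have hka1 : 1 ≤ ka := Nat.one_le_iff_ne_zero.mpr
    (fun h0 => ha (by rw [hka, h0, Nat.cast_zero]))
  have hnat2 : ∀ b, ∃ m : ℕ, co W χ₂ b = m := by
    intro b
    by_cases hb : InOrb a b
    · refine ⟨ka - 1, ?_⟩
      rw [hco2 b, if_pos hb, horb b hb, hka, Nat.cast_sub hka1, Nat.cast_one]
    · obtain ⟨m, hm⟩ := co_isChar_nat W hchar b
      exact ⟨m, by rw [hco2 b, if_neg hb, hm, sub_zero]⟩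
  choose m2 hm2 using hnat2
  have hχ₂eq : χ₂ = fun x => ∑ b : gl F n, (m2 b : ℂ) * ech W b x := by
    funext x
    rw [← sum_co_ech W χ₂ x]
    exact Finset.sum_congr rfl fun b _ => by rw [hm2 b]
  have hchar2 : IsChar n χ₂ := by
    rw [hχ₂eq]
    exact isChar_nat_comb W m2
  have hinv2 : Invariant n χ₂ := by
    intro g x
    rw [hχ₂]
    simp only
    rw [hinv g x, Osum_invariant W a g x]
  have hde : χ = Osum W a + χ₂ := by
    funext x
    rw [hχ₂]
    simp
  have hχ₂ne : χ₂ ≠ 0 := by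
    intro h0
    apply hneq
    funext x
    have hx := congrFun h0 x
    rw [hχ₂] at hx
    simp only [Pi.zero_apply] at hx
    exact sub_eq_zero.mp hx
  exact hirr ⟨Osum W a, χ₂, ⟨Osum_isChar W a, Osum_invariant W a⟩, ⟨hchar2, hinv2⟩,
    Osum_ne_zero W a, hχ₂ne, hde⟩

lemma card_GL_ne_zero {n : ℕ} :
    (Fintype.card (Matrix.GeneralLinearGroup (Fin n) F) : ℂ) ≠ 0 := by
  exact_mod_cast Fintype.card_ne_zero

lemma inn_Osum_right (W : AChar F) {n : ℕ} (f : gl F n → ℂ) (b : gl F n) :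
    inn n f (Osum W b) = (Fintype.card (Matrix.GeneralLinearGroup (Fin n) F) : ℂ)⁻¹ *
      ((Fintype.card (gl F n) : ℂ) * ∑ d : gl F n, if InOrb b d then co W f d else 0) := by
  unfold inn
  congr 1
  have hconj : ∀ x, (starRingEnd ℂ) (Osum W b x)
      = ∑ d : gl F n, if InOrb b d then ech W d (-x) else 0 := by
    intro x
    unfold Osum
    rw [_root_.map_sum]
    refine Finset.sum_congr rfl fun d _ => ?_
    by_cases hd : InOrb b d
    · rw [if_pos hd, if_pos hd, ech_conj]
    · rw [if_neg hd, if_neg hd, _root_.map_zero]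
  calc ∑ x : gl F n, f x * (starRingEnd ℂ) (Osum W b x)
      = ∑ x : gl F n, ∑ d : gl F n, (if InOrb b d then f x * ech W d (-x) else 0) := by
        refine Finset.sum_congr rfl fun x _ => ?_
        rw [hconj x, Finset.mul_sum]
        refine Finset.sum_congr rfl fun d _ => ?_
        by_cases hd : InOrb b d <;> simp [hd]
    _ = ∑ d : gl F n, ∑ x : gl F n, (if InOrb b d then f x * ech W d (-x) else 0) :=
        Finset.sum_comm
    _ = ∑ d : gl F n, (if InOrb b d then ∑ x : gl F n, f x * ech W d (-x) else 0) := by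
        refine Finset.sum_congr rfl fun d _ => ?_
        by_cases hd : InOrb b d <;> simp [hd]
    _ = (Fintype.card (gl F n) : ℂ) * ∑ d : gl F n, if InOrb b d then co W f d else 0 := by
        rw [Finset.mul_sum]
        refine Finset.sum_congr rfl fun d _ => ?_
        by_cases hd : InOrb b d
        · rw [if_pos hd, if_pos hd]
          unfold co
          rw [← mul_assoc, mul_inv_cancel₀ card_gl_ne_zero, one_mul]
        · simp [hd]

lemma inn_Osum_Osum_zero (W : AChar F) {n : ℕ} {a b : gl F n} (hab : ¬ InOrb a b) :
    inn n (Osum W a) (Osum W b) = 0 := by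
  rw [inn_Osum_right]
  have h : ∀ d : gl F n, (if InOrb b d then co W (Osum W a) d else 0) = 0 := by
    intro d
    by_cases hd : InOrb b d
    · rw [if_pos hd, co_Osum W a d, if_neg (fun had => hab (had.trans' hd.symm'))]
    · rw [if_neg hd]
  rw [Finset.sum_congr rfl fun d _ => h d]
  simp

lemma inn_Osum_self_ne (W : AChar F) {n : ℕ} (a : gl F n) :
    inn n (Osum W a) (Osum W a) ≠ 0 := by
  rw [inn_Osum_right]
  have h : ∀ d : gl F n, (if InOrb a d then co W (Osum W a) d else 0)
      = if InOrb a d then 1 else 0 := by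
    intro d
    by_cases hd : InOrb a d
    · rw [if_pos hd, if_pos hd, co_Osum W a d, if_pos hd]
    · rw [if_neg hd, if_neg hd]
  rw [Finset.sum_congr rfl fun d _ => h d, Finset.sum_boole]
  have hcardorb : ((Finset.univ.filter (fun d : gl F n => InOrb a d)).card : ℂ) ≠ 0 := by
    have hpos : 0 < (Finset.univ.filter (fun d : gl F n => InOrb a d)).card :=
      Finset.card_pos.mpr ⟨a, Finset.mem_filter.mpr ⟨Finset.mem_univ a, InOrb.rfl' a⟩⟩
    exact_mod_cast hpos.ne'
  exact mul_ne_zero (inv_ne_zero card_GL_ne_zero)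
    (mul_ne_zero card_gl_ne_zero hcardorb)

lemma inn_zero_left {n : ℕ} (h : gl F n → ℂ) : inn n (0 : gl F n → ℂ) h = 0 := by
  unfold inn
  simp

lemma inn_sum_left {n : ℕ} {ι : Type*} (s : Finset ι) (g : ι → ℂ) (v : ι → gl F n → ℂ)
    (h : gl F n → ℂ) :
    inn n (∑ j ∈ s, g j • v j) h = ∑ j ∈ s, g j * inn n (v j) h := by
  unfold inn
  have h1 : ∀ x : gl F n, (∑ j ∈ s, g j • v j) x * (starRingEnd ℂ) (h x)
      = ∑ j ∈ s, g j * (v j x * (starRingEnd ℂ) (h x)) := by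
    intro x
    rw [Finset.sum_apply, Finset.sum_mul]
    refine Finset.sum_congr rfl fun j _ => ?_
    rw [Pi.smul_apply, smul_eq_mul, mul_assoc]
  have h2 : ∑ x : gl F n, (∑ j ∈ s, g j • v j) x * (starRingEnd ℂ) (h x)
      = ∑ j ∈ s, g j * ∑ x : gl F n, v j x * (starRingEnd ℂ) (h x) := by
    rw [Finset.sum_congr rfl fun x _ => h1 x, Finset.sum_comm]
    exact Finset.sum_congr rfl fun j _ => by rw [← Finset.mul_sum]
  rw [h2, Finset.mul_sum]
  refine Finset.sum_congr rfl fun j _ => ?_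
  ring

end AuxMain


/-- the irreducible invariant characters of `gl_n(F_q)` are pairwise
orthogonal and form a `ℂ`-basis of the space `C_n` of invariant functions. -/
theorem irr_inv_chars_orthogonal_basis (F : Type) [Field F] [Fintype F] [DecidableEq F]
    (n : ℕ) :
    (∀ χ₁ χ₂ : gl F n → ℂ, IrrInvChar n χ₁ → IrrInvChar n χ₂ → χ₁ ≠ χ₂ →
      inn n χ₁ χ₂ = 0) ∧
    LinearIndependent ℂ (fun χ : {χ : gl F n → ℂ // IrrInvChar n χ} => (χ : gl F n → ℂ)) ∧
    Submodule.span ℂ {χ : gl F n → ℂ | IrrInvChar n χ} = InvSub F n := by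
  obtain ⟨W⟩ := exists_achar F
  refine ⟨?_, ?_, ?_⟩
  · -- orthogonality
    intro χ₁ χ₂ h1 h2 hne
    obtain ⟨a, rfl⟩ := irr_eq_Osum W h1
    obtain ⟨b, rfl⟩ := irr_eq_Osum W h2
    have hab : ¬ InOrb a b := fun h => hne (Osum_eq_of W h)
    exact inn_Osum_Osum_zero W hab
  · -- linear independence
    rw [linearIndependent_iff']
    intro s g hsum i hi
    have h1 : inn n (∑ j ∈ s, g j • (j : gl F n → ℂ)) (i : gl F n → ℂ) = 0 := by
      rw [hsum, inn_zero_left]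
    rw [inn_sum_left] at h1
    have horth : ∀ j ∈ s, j ≠ i →
        inn n (j : gl F n → ℂ) (i : gl F n → ℂ) = 0 := by
      intro j _ hji
      obtain ⟨a, ha⟩ := irr_eq_Osum W j.2
      obtain ⟨b, hb⟩ := irr_eq_Osum W i.2
      rw [ha, hb]
      refine inn_Osum_Osum_zero W (fun hab => hji (Subtype.ext ?_))
      rw [ha, hb]
      exact Osum_eq_of W hab
    have hself : inn n (i : gl F n → ℂ) (i : gl F n → ℂ) ≠ 0 := by
      obtain ⟨b, hb⟩ := irr_eq_Osum W i.2
      rw [hb]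
      exact inn_Osum_self_ne W b
    rw [Finset.sum_eq_single i (fun j hj hji => by rw [horth j hj hji, mul_zero])
      (fun hnotmem => absurd hi hnotmem)] at h1
    exact (mul_eq_zero.mp h1).resolve_right hself
  · -- span
    apply le_antisymm
    · rw [Submodule.span_le]
      intro χ hχ
      exact hχ.1.2
    · intro f hf
      have hfInv : Invariant n f := hf
      set k : gl F n → ℂ :=
        fun a => ((Finset.univ.filter (fun c : gl F n => InOrb a c)).card : ℂ)⁻¹ * co W f a
        with hk
      have hkconst : ∀ b a : gl F n, InOrb a b → k a = k b := by
        intro b a hab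
        rw [hk]
        simp only
        have h1 : co W f a = co W f b := by
          obtain ⟨g, hg⟩ := hab.symm'
          rw [← hg, co_conjM W f hfInv]
        have h2 : Finset.univ.filter (fun c : gl F n => InOrb a c)
            = Finset.univ.filter (fun c : gl F n => InOrb b c) :=
          Finset.filter_congr fun c _ => InOrb_iff_of hab c
        rw [h1, h2]
      have hrepr : ∀ x, (∑ a : gl F n, k a • Osum W a) x = f x := by
        intro x
        rw [Finset.sum_apply]
        have h1 : ∀ a : gl F n, (k a • Osum W a) x
            = ∑ b : gl F n, if InOrb a b then k a * ech W b x else 0 := by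
          intro a
          rw [Pi.smul_apply, smul_eq_mul]
          unfold Osum
          rw [Finset.mul_sum]
          refine Finset.sum_congr rfl fun b _ => ?_
          by_cases hb : InOrb a b <;> simp [hb]
        rw [Finset.sum_congr rfl fun a _ => h1 a, Finset.sum_comm]
        have h2 : ∀ b : gl F n,
            (∑ a : gl F n, if InOrb a b then k a * ech W b x else 0)
              = co W f b * ech W b x := by
          intro b
          have e1 : ∀ a : gl F n, (if InOrb a b then k a * ech W b x else 0)
              = (if InOrb b a then k b * ech W b x else 0) := by
            intro a
            by_cases ha : InOrb a b
            · rw [if_pos ha, if_pos ha.symm', hkconst b a ha]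
            · rw [if_neg ha, if_neg (fun h => ha h.symm')]
          rw [Finset.sum_congr rfl fun a _ => e1 a, ← Finset.sum_filter,
            Finset.sum_const, nsmul_eq_mul]
          have hcardb : ((Finset.univ.filter (fun c : gl F n => InOrb b c)).card : ℂ) ≠ 0 := by
            have hpos : 0 < (Finset.univ.filter (fun c : gl F n => InOrb b c)).card :=
              Finset.card_pos.mpr ⟨b, Finset.mem_filter.mpr ⟨Finset.mem_univ b, InOrb.rfl' b⟩⟩
            exact_mod_cast hpos.ne'
          rw [hk]
          simp only
          rw [← mul_assoc, ← mul_assoc, mul_inv_cancel₀ hcardb, one_mul]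
        rw [Finset.sum_congr rfl fun b _ => h2 b]
        exact sum_co_ech W f x
      have hfe : f = ∑ a : gl F n, k a • Osum W a := by
        funext x
        exact (hrepr x).symm
      rw [hfe]
      refine Submodule.sum_mem _ fun a _ => Submodule.smul_mem _ _ (Submodule.subset_span ?_)
      exact Osum_irr W a

end HCPaper
end

section
/- Harish-Chandra restriction is independent of the choice of parabolic (opposite parabolics give the same operator): for all k, l ≥ 1 with k + l = n, every invariant function f ∈ C_n, and all x ∈ gl_k(𝔽_q), y ∈ gl_l(𝔽_q), one has Σ_{u ∈ Mat_{k×l}(𝔽_q)} f([x u; 0 y]) = Σ_{v ∈ Mat_{l×k}(𝔽_q)} f([x 0; v y]), where [x u; 0 y] is the block upper-triangular matrix with diagonal blocks x, y and upper off-diagonal block u, and [x 0; v y] is the block lower-triangular matrix with diagonal blocks x, y and lower off-diagonal block v. -/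
open Matrix BigOperators

namespace HCPaper

open scoped Classical

variable {F : Type} [Field F] [Fintype F] [DecidableEq F]

section AuxTranspose
open Polynomial

/-- The Frobenius-type pairing on `F[X] ⧸ (b)`. -/
theorem exists_pair_quot (b : F[X]) (hb : b ≠ 0) :
    ∃ B : (F[X] ⧸ (Ideal.span {b} : Ideal F[X])) →
          (F[X] ⧸ (Ideal.span {b} : Ideal F[X])) → F,
      (∀ u u' w, B (u + u') w = B u w + B u' w) ∧
      (∀ (c : F) u w, B ((Polynomial.C c : F[X]) • u) w = c * B u w) ∧
      (∀ u w, B u w = B w u) ∧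
      (∀ (r : F[X]) u w, B (r • u) w = B u (r • w)) ∧
      (∀ u, u ≠ 0 → ∃ w, B u w ≠ 0) := by
  classical
  -- monic associate of b
  set m : F[X] := b * C b.leadingCoeff⁻¹ with hm_def
  have hmonic : m.Monic := monic_mul_leadingCoeff_inv hb
  have hdvd_iff : ∀ s : F[X], m ∣ s ↔ b ∣ s := by
    intro s
    constructor
    · rintro ⟨t, rfl⟩; exact ⟨C b.leadingCoeff⁻¹ * t, by ring⟩
    · rintro ⟨t, rfl⟩
      refine ⟨C b.leadingCoeff * t, ?_⟩
      rw [hm_def]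
      have h1 : C b.leadingCoeff⁻¹ * C b.leadingCoeff = 1 := by
        rw [← C_mul, inv_mul_cancel₀ (leadingCoeff_ne_zero.mpr hb), C_1]
      have h2 : b * C b.leadingCoeff⁻¹ * (C b.leadingCoeff * t)
          = b * ((C b.leadingCoeff⁻¹ * C b.leadingCoeff) * t) := by ring
      rw [h2, h1, one_mul]
  have hmem : ∀ s : F[X], s ∈ (Ideal.span {b} : Ideal F[X]) ↔ m ∣ s := by
    intro s; rw [Ideal.mem_span_singleton, hdvd_iff]
  set d : ℕ := m.natDegree - 1 with hd
  -- the linear functional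
  set lam0 : F[X] → F := fun s => (s %ₘ m).coeff d with hlam0
  have hlam0_wd : ∀ s t : F[X], s - t ∈ (Ideal.span {b} : Ideal F[X]) → lam0 s = lam0 t := by
    intro s t hst
    have : (s - t) %ₘ m = 0 := (modByMonic_eq_zero_iff_dvd hmonic).2 ((hmem _).1 hst)
    have hsub : s %ₘ m - t %ₘ m = (s - t) %ₘ m := by
      rw [sub_eq_add_neg s t, add_modByMonic, neg_modByMonic, sub_eq_add_neg]
    have : s %ₘ m = t %ₘ m := by
      have := hsub.trans this
      linear_combination (norm := ring_nf) this
    simp [hlam0, this]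
  -- lift to the quotient
  set lam : (F[X] ⧸ (Ideal.span {b} : Ideal F[X])) → F :=
    fun u => Quotient.liftOn' u lam0 (fun s t hst => hlam0_wd s t
      ((Submodule.quotientRel_def _).mp (Quotient.eq''.mp (Quotient.sound' hst)))) with hlam
  have lam_mk : ∀ s : F[X], lam (Submodule.Quotient.mk s) = (s %ₘ m).coeff d := fun s => rfl
  have mk_mul : ∀ s t : F[X],
      (Submodule.Quotient.mk s : F[X] ⧸ (Ideal.span {b} : Ideal F[X])) * Submodule.Quotient.mk t
        = Submodule.Quotient.mk (s * t) := by
    intro s t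
    rw [Ideal.Quotient.mk_eq_mk, Ideal.Quotient.mk_eq_mk, Ideal.Quotient.mk_eq_mk, ← _root_.map_mul]
  have mk_smul : ∀ (r s : F[X]),
      r • (Submodule.Quotient.mk s : F[X] ⧸ (Ideal.span {b} : Ideal F[X]))
        = Submodule.Quotient.mk (r * s) := by
    intro r s
    rw [← Submodule.Quotient.mk_smul, smul_eq_mul]
  have surj : ∀ u : F[X] ⧸ (Ideal.span {b} : Ideal F[X]),
      ∃ s : F[X], Submodule.Quotient.mk s = u := fun u => Submodule.Quotient.mk_surjective _ u
  refine ⟨fun u w => lam (u * w), ?_, ?_, ?_, ?_, ?_⟩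
  · intro u u' w
    obtain ⟨s, rfl⟩ := surj u; obtain ⟨s', rfl⟩ := surj u'; obtain ⟨t, rfl⟩ := surj w
    show lam ((Submodule.Quotient.mk s + Submodule.Quotient.mk s') * Submodule.Quotient.mk t)
      = lam (Submodule.Quotient.mk s * Submodule.Quotient.mk t)
        + lam (Submodule.Quotient.mk s' * Submodule.Quotient.mk t)
    rw [← Submodule.Quotient.mk_add, mk_mul, mk_mul, mk_mul, lam_mk, lam_mk, lam_mk,
      add_mul, add_modByMonic, coeff_add]
  · intro c u w
    obtain ⟨s, rfl⟩ := surj u; obtain ⟨t, rfl⟩ := surj w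
    show lam ((C c • Submodule.Quotient.mk s) * Submodule.Quotient.mk t)
      = c * lam (Submodule.Quotient.mk s * Submodule.Quotient.mk t)
    rw [mk_smul, mk_mul, mk_mul, lam_mk, lam_mk]
    have h1 : C c * s * t = c • (s * t) := by rw [smul_eq_C_mul]; ring
    rw [h1, smul_modByMonic, coeff_smul, smul_eq_mul]
  · intro u w
    obtain ⟨s, rfl⟩ := surj u; obtain ⟨t, rfl⟩ := surj w
    show lam (Submodule.Quotient.mk s * Submodule.Quotient.mk t)
      = lam (Submodule.Quotient.mk t * Submodule.Quotient.mk s)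
    rw [mul_comm]
  · intro r u w
    obtain ⟨s, rfl⟩ := surj u; obtain ⟨t, rfl⟩ := surj w
    show lam ((r • Submodule.Quotient.mk s) * Submodule.Quotient.mk t)
      = lam (Submodule.Quotient.mk s * (r • Submodule.Quotient.mk t))
    rw [mk_smul, mk_smul, mk_mul, mk_mul]
    have h1 : r * s * t = s * (r * t) := by ring
    rw [h1]
  · intro u hu
    obtain ⟨s, rfl⟩ := surj u
    have hs : ¬ m ∣ s := by
      intro hdvd
      exact hu ((Submodule.Quotient.mk_eq_zero _).mpr ((hmem s).mpr hdvd))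
    have hs'0 : s %ₘ m ≠ 0 := fun h => hs ((modByMonic_eq_zero_iff_dvd hmonic).mp h)
    have hmk : (Submodule.Quotient.mk (s %ₘ m) : F[X] ⧸ (Ideal.span {b} : Ideal F[X]))
        = Submodule.Quotient.mk s := by
      rw [Submodule.Quotient.eq]
      refine (hmem _).mpr ?_
      have h6 := modByMonic_add_div s m
      refine ⟨-(s /ₘ m), ?_⟩
      linear_combination h6
    have hdeg : (s %ₘ m).degree < m.degree := degree_modByMonic_lt s hmonic
    have hnat : (s %ₘ m).natDegree < m.natDegree := natDegree_lt_natDegree hs'0 hdeg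
    have hed : (s %ₘ m).natDegree ≤ d := by omega
    refine ⟨Submodule.Quotient.mk (X ^ (d - (s %ₘ m).natDegree)), ?_⟩
    show lam (Submodule.Quotient.mk s
      * Submodule.Quotient.mk (X ^ (d - (s %ₘ m).natDegree))) ≠ 0
    rw [← hmk, mk_mul, lam_mk]
    have hdeg2 : ((s %ₘ m) * X ^ (d - (s %ₘ m).natDegree)).degree < m.degree := by
      refine lt_of_le_of_lt (degree_le_natDegree) ?_
      have h7 : ((s %ₘ m) * X ^ (d - (s %ₘ m).natDegree)).natDegree
          = (s %ₘ m).natDegree + (d - (s %ₘ m).natDegree) := by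
        rw [natDegree_mul hs'0 (pow_ne_zero _ X_ne_zero), natDegree_X_pow]
      rw [h7]
      have h3 : (s %ₘ m).natDegree + (d - (s %ₘ m).natDegree) = d := by omega
      rw [h3]
      calc ((d : WithBot ℕ)) < (m.natDegree : WithBot ℕ) := by
            exact_mod_cast (by omega : d < m.natDegree)
        _ = m.degree := (degree_eq_natDegree hmonic.ne_zero).symm
    rw [(modByMonic_eq_self_iff hmonic).mpr hdeg2, coeff_mul_X_pow']
    rw [if_pos (by omega : d - (s %ₘ m).natDegree ≤ d)]
    have h4 : d - (d - (s %ₘ m).natDegree) = (s %ₘ m).natDegree := by omega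
    rw [h4]
    exact mt leadingCoeff_eq_zero.mp hs'0

theorem exists_selfadjoint_pairing (n : ℕ) (φ : Module.End F (Fin n → F)) :
    ∃ B : (Fin n → F) → (Fin n → F) → F,
      (∀ u u' w, B (u + u') w = B u w + B u' w) ∧
      (∀ (c : F) u w, B (c • u) w = c * B u w) ∧
      (∀ u w, B u w = B w u) ∧
      (∀ u w, B (φ u) w = B u (φ w)) ∧
      (∀ u, u ≠ 0 → ∃ w, B u w ≠ 0) := by
  classical
  have tors : Module.IsTorsion F[X] (Module.AEval' φ) := by
    intro x
    refine ⟨⟨φ.charpoly, mem_nonZeroDivisors_of_ne_zero φ.charpoly_monic.ne_zero⟩, ?_⟩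
    have : (φ.charpoly : F[X]) • x = 0 := by
      apply (Module.AEval'.of φ).symm.injective
      rw [Module.AEval.of_symm_smul, φ.aeval_self_charpoly]
      simp
    exact this
  obtain ⟨ι, hι, p, hp, e, ⟨eqv⟩⟩ :=
    Module.equiv_directSum_of_isTorsion (M := Module.AEval' φ) tors
  have hpair := fun i : ι => exists_pair_quot (p i ^ e i) (pow_ne_zero _ (hp i).ne_zero)
  choose Bi h1 h2 h3 h4 h5 using hpair
  letI : Fintype ι := hι
  let E := eqv.trans (DirectSum.linearEquivFunOnFintype F[X] ι _)
  let ev : (Fin n → F) → ∀ i, F[X] ⧸ (Ideal.span {p i ^ e i} : Ideal F[X]) :=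
    fun u => E (Module.AEval'.of φ u)
  have ev_add : ∀ u u', ev (u + u') = ev u + ev u' := by
    intro u u'; simp only [ev, map_add]
  have ev_smul : ∀ (c : F) u, ev (c • u) = (Polynomial.C c : F[X]) • ev u := by
    intro c u
    simp only [ev]
    rw [_root_.map_smul]
    have : (c • (Module.AEval'.of φ u) : Module.AEval' φ)
        = (Polynomial.C c : F[X]) • (Module.AEval'.of φ u) := (Module.AEval.C_smul _ _ _).symm
    rw [this, _root_.map_smul]
  have ev_phi : ∀ u, ev (φ u) = (Polynomial.X : F[X]) • ev u := by
    intro u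
    simp only [ev]
    rw [← Module.AEval'.X_smul_of, _root_.map_smul]
  have hzero : ∀ i q, Bi i q 0 = 0 := by
    intro i q
    have h := h1 i 0 0 q
    rw [add_zero] at h
    have h0 : Bi i 0 q = 0 := left_eq_add.mp h
    rw [h3 i q 0, h0]
  refine ⟨fun u w => ∑ i, Bi i (ev u i) (ev w i), ?_, ?_, ?_, ?_, ?_⟩
  · intro u u' w
    rw [← Finset.sum_add_distrib]
    refine Finset.sum_congr rfl fun i _ => ?_
    rw [ev_add, Pi.add_apply, h1]
  · intro c u w
    rw [Finset.mul_sum]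
    refine Finset.sum_congr rfl fun i _ => ?_
    rw [ev_smul, Pi.smul_apply, h2]
  · intro u w
    exact Finset.sum_congr rfl fun i _ => h3 i _ _
  · intro u w
    refine Finset.sum_congr rfl fun i _ => ?_
    rw [ev_phi, ev_phi, Pi.smul_apply, Pi.smul_apply, h4]
  · intro u hu
    have hev : ev u ≠ 0 := by
      intro h0
      apply hu
      have : Module.AEval'.of φ u = 0 := by
        apply E.injective
        rw [_root_.map_zero]
        exact h0
      simpa using (Module.AEval'.of φ).injective (by simpa using this)
    obtain ⟨i, hi⟩ := Function.ne_iff.mp hev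
    obtain ⟨w0, hw0⟩ := h5 i (ev u i) (by simpa using hi)
    refine ⟨(Module.AEval'.of φ).symm (E.symm (Pi.single i w0)), ?_⟩
    have hevw : ev ((Module.AEval'.of φ).symm (E.symm (Pi.single i w0))) = Pi.single i w0 := by
      simp only [ev, LinearEquiv.apply_symm_apply]
    show (∑ j, Bi j (ev u j) (ev ((Module.AEval'.of φ).symm (E.symm (Pi.single i w0))) j)) ≠ 0
    simp only [hevw]
    rw [Finset.sum_eq_single i]
    · rwa [Pi.single_eq_same]
    · intro j _ hji
      rw [Pi.single_eq_of_ne hji]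
      exact hzero j _
    · intro hmem
      exact absurd (Finset.mem_univ i) hmem

theorem exists_conj_transpose (n : ℕ) (A : Matrix (Fin n) (Fin n) F) :
    ∃ u : (Matrix (Fin n) (Fin n) F)ˣ, (↑u : Matrix (Fin n) (Fin n) F) * A * (↑u⁻¹ : Matrix (Fin n) (Fin n) F) = Aᵀ := by
  classical
  obtain ⟨B, hadd, hsmul, hsymm, hphi, hsep⟩ :=
    exists_selfadjoint_pairing n (Matrix.mulVecLin A)
  have hB0 : ∀ w, B 0 w = 0 := by
    intro w
    have h := hadd 0 0 w
    rw [add_zero] at h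
    exact left_eq_add.mp h
  have hBsum : ∀ (v w : Fin n → F), B v w = ∑ i, v i * B (Pi.single i 1) w := by
    intro v w
    have hv : v = ∑ i, (v i) • (Pi.single i (1 : F) : Fin n → F) := by
      funext j
      simp [Pi.single_apply, Finset.sum_ite_eq', mul_comm]
    conv_lhs => rw [hv]
    rw [show B (∑ i, (v i) • (Pi.single i (1:F) : Fin n → F)) w
      = ∑ i, B ((v i) • (Pi.single i (1:F) : Fin n → F)) w from ?_]
    · exact Finset.sum_congr rfl fun i _ => hsmul (v i) _ w
    · induction (Finset.univ : Finset (Fin n)) using Finset.cons_induction with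
      | empty => simpa using hB0 w
      | cons a s ha ih => rw [Finset.sum_cons, Finset.sum_cons, hadd, ih]
  set H : Matrix (Fin n) (Fin n) F :=
    Matrix.of (fun i j => B (Pi.single i 1) (Pi.single j 1)) with hH
  have hmv : ∀ i, (Matrix.mulVecLin A) (Pi.single i 1) = fun k => A k i := by
    intro i
    funext k
    simp [Matrix.mulVecLin_apply, Matrix.mulVec_single]
  have key : Aᵀ * H = H * A := by
    ext i j
    rw [Matrix.mul_apply, Matrix.mul_apply]
    have h1 : B ((Matrix.mulVecLin A) (Pi.single i 1)) (Pi.single j 1)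
        = (∑ k, Aᵀ i k * H k j) := by
      rw [hmv i, hBsum]
      rfl
    have h2 : B (Pi.single i 1) ((Matrix.mulVecLin A) (Pi.single j 1))
        = (∑ k, H i k * A k j) := by
      rw [hmv j, hsymm, hBsum]
      exact Finset.sum_congr rfl fun k _ => by
        rw [hsymm (Pi.single k 1) (Pi.single i 1), mul_comm]
        rfl
    rw [← h1, ← h2, hphi]
  have hHdet : H.det ≠ 0 := by
    intro h0
    obtain ⟨v, hv0, hv⟩ := (Matrix.exists_mulVec_eq_zero_iff).mpr h0
    have hvi : ∀ i, B v (Pi.single i 1) = 0 := by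
      intro i
      have := congrFun hv i
      rw [Matrix.mulVec, dotProduct] at this
      have h2 : B v (Pi.single i 1) = ∑ j, H i j * v j := by
        rw [hBsum]
        exact Finset.sum_congr rfl fun j _ => by
          rw [hsymm (Pi.single j 1) (Pi.single i 1), mul_comm]
          rfl
      rw [h2]
      simpa using this
    obtain ⟨w, hw⟩ := hsep v hv0
    apply hw
    rw [hsymm, hBsum]
    refine Finset.sum_eq_zero fun i _ => ?_
    rw [hsymm (Pi.single i 1) v, hvi i, mul_zero]
  have hUnit : IsUnit H := (Matrix.isUnit_iff_isUnit_det H).mpr (isUnit_iff_ne_zero.mpr hHdet)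
  obtain ⟨u, hu⟩ := hUnit
  refine ⟨u, ?_⟩
  rw [hu, ← key, Matrix.mul_assoc]
  have h4 : H * (↑u⁻¹ : Matrix (Fin n) (Fin n) F) = 1 := by rw [← hu, Units.mul_inv]
  rw [h4, Matrix.mul_one]

end AuxTranspose

/-- Harish-Chandra restriction is independent of the choice of parabolic. -/
theorem HCres_parabolic_independent (F : Type) [Field F] [Fintype F] [DecidableEq F]
    (k l : ℕ) (hk : 1 ≤ k) (hl : 1 ≤ l)
    (f : gl F (k + l) → ℂ) (hf : Invariant (k + l) f)
    (x : gl F k) (y : gl F l) :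
    ∑ u : Matrix (Fin k) (Fin l) F, f (but k l x u y) =
      ∑ v : Matrix (Fin l) (Fin k) F, f (blt k l x v y) := by
  classical
  -- f is invariant under transpose
  have ftr : ∀ m : gl F (k + l), f mᵀ = f m := by
    intro m
    obtain ⟨u, hu⟩ := exists_conj_transpose (k + l) m
    have h1 := hf u m
    have h2 : conjM u m = mᵀ := hu
    rw [← h2, h1]
  -- conjugating units for x and y
  obtain ⟨gx, hgx⟩ := exists_conj_transpose k x
  obtain ⟨gy, hgy⟩ := exists_conj_transpose l y
  -- the block diagonal unit
  set e := (finSumFinEquiv : Fin k ⊕ Fin l ≃ Fin (k + l)) with he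
  have hmul : ∀ (M N : Matrix (Fin k ⊕ Fin l) (Fin k ⊕ Fin l) F),
      (Matrix.reindex e e M) * (Matrix.reindex e e N) = Matrix.reindex e e (M * N) := by
    intro M N
    simp only [Matrix.reindex_apply]
    exact Matrix.submatrix_mul_equiv M N e.symm e.symm e.symm
  have hone : Matrix.reindex e e (1 : Matrix (Fin k ⊕ Fin l) (Fin k ⊕ Fin l) F) = 1 := by
    simp only [Matrix.reindex_apply]
    exact Matrix.submatrix_one_equiv e.symm
  set GX : Matrix (Fin k) (Fin k) F := ↑gx with hGX
  set GXi : Matrix (Fin k) (Fin k) F := ↑gx⁻¹ with hGXi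
  set GY : Matrix (Fin l) (Fin l) F := ↑gy with hGY
  set GYi : Matrix (Fin l) (Fin l) F := ↑gy⁻¹ with hGYi
  have hx1 : GX * GXi = 1 := Units.mul_inv gx
  have hx2 : GXi * GX = 1 := Units.inv_mul gx
  have hy1 : GY * GYi = 1 := Units.mul_inv gy
  have hy2 : GYi * GY = 1 := Units.inv_mul gy
  set Gv : Matrix (Fin (k+l)) (Fin (k+l)) F :=
    Matrix.reindex e e (Matrix.fromBlocks GX 0 0 GY) with hGv
  set Gi : Matrix (Fin (k+l)) (Fin (k+l)) F :=
    Matrix.reindex e e (Matrix.fromBlocks GXi 0 0 GYi) with hGi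
  have hGvi : Gv * Gi = 1 := by
    rw [hGv, hGi, hmul, Matrix.fromBlocks_multiply]
    simp only [Matrix.mul_zero, Matrix.zero_mul, mul_zero, zero_mul, add_zero, zero_add]
    rw [hx1, hy1, Matrix.fromBlocks_one]
    exact hone
  have hGiv : Gi * Gv = 1 := by
    rw [hGv, hGi, hmul, Matrix.fromBlocks_multiply]
    simp only [Matrix.mul_zero, Matrix.zero_mul, mul_zero, zero_mul, add_zero, zero_add]
    rw [hx2, hy2, Matrix.fromBlocks_one]
    exact hone
  set G : Matrix.GeneralLinearGroup (Fin (k+l)) F := ⟨Gv, Gi, hGvi, hGiv⟩ with hG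
  -- conjugation of but by G
  have hconj : ∀ u : Matrix (Fin k) (Fin l) F,
      conjM G (but k l x u y) = but k l (GX * x * GXi) (GX * u * GYi) (GY * y * GYi) := by
    intro u
    show Gv * (but k l x u y) * Gi = _
    rw [but, but, hGv, hGi, hmul, hmul, Matrix.fromBlocks_multiply, Matrix.fromBlocks_multiply]
    refine congrArg (Matrix.reindex e e) ?_
    simp only [Matrix.mul_zero, Matrix.zero_mul, mul_zero, zero_mul, add_zero, zero_add,
      Matrix.mul_assoc]
  -- step 1 : LHS equals sum over but xᵀ u yᵀ
  have step1 : ∑ u : Matrix (Fin k) (Fin l) F, f (but k l x u y)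
      = ∑ u : Matrix (Fin k) (Fin l) F, f (but k l xᵀ u yᵀ) := by
    have hsame : ∀ u, f (but k l x u y) = f (but k l xᵀ (GX * u * GYi) yᵀ) := by
      intro u
      rw [← hgx, ← hgy, ← hconj u, hf G (but k l x u y)]
    rw [Finset.sum_congr rfl fun u _ => hsame u]
    refine Fintype.sum_bijective (fun u => GX * u * GYi) ?_ _ _ (fun u => rfl)
    constructor
    · intro a b hab
      have h5 := congrArg (fun z => GXi * z * GY) hab
      simp only [] at h5
      calc a = (GXi * GX) * a * (GYi * GY) := by rw [hx2, hy2, Matrix.one_mul, Matrix.mul_one]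
        _ = GXi * (GX * a * GYi) * GY := by simp only [Matrix.mul_assoc]
        _ = GXi * (GX * b * GYi) * GY := by rw [h5]
        _ = (GXi * GX) * b * (GYi * GY) := by simp only [Matrix.mul_assoc]
        _ = b := by rw [hx2, hy2, Matrix.one_mul, Matrix.mul_one]
    · intro c
      refine ⟨GXi * c * GY, ?_⟩
      calc GX * (GXi * c * GY) * GYi = (GX * GXi) * c * (GY * GYi) := by simp only [Matrix.mul_assoc]
        _ = c := by rw [hx1, hy1, Matrix.one_mul, Matrix.mul_one]
  -- step 2 : RHS equals the same sum
  have step2 : ∑ v : Matrix (Fin l) (Fin k) F, f (blt k l x v y)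
      = ∑ u : Matrix (Fin k) (Fin l) F, f (but k l xᵀ u yᵀ) := by
    have htr : ∀ v : Matrix (Fin l) (Fin k) F,
        f (blt k l x v y) = f (but k l xᵀ vᵀ yᵀ) := by
      intro v
      rw [← ftr (blt k l x v y)]
      congr 1
      rw [blt, but, Matrix.reindex_apply, Matrix.reindex_apply, Matrix.transpose_submatrix,
        Matrix.fromBlocks_transpose, Matrix.transpose_zero]
    rw [Finset.sum_congr rfl fun v _ => htr v]
    exact Fintype.sum_bijective (fun v => vᵀ)
      ⟨fun a b hab => by simpa using congrArg Matrix.transpose hab,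
       fun c => ⟨cᵀ, Matrix.transpose_transpose c⟩⟩ _ _ (fun v => rfl)
  rw [step1, step2]

end HCPaper
end
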